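/- (Pairing boxes of bounded weight) Let d = 1 and let there be m boxes, each containing only items with individual weight less than 1/2 − 2ε, with each box's total weight between ε and 1/2. Each box can be split into two parts, one with weight in [ε, 1/2 − ε] and the remainder. Then, grouping the m boxes into groups of 3 and recombining split parts, the m boxes' contents can be packed into at most 3 + 2m/3 bins, each of total weight at most 1 − ε. -/

import Mathlib

/-- Pairing boxes of bounded weight (`d = 1`): `m` boxes with total weight in `[ε, 1/2]`,
each splittable into a part of weight in `[ε, 1/2−ε]` and the remainder, can be packed
(assigning each of the two parts of each box to a bin) into at most `3 + 2m/3` bins,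
each of total weight at most `1 − ε`. -/
theorem stmt_19 (m : ℕ) (ε : ℝ) (hε : 0 < ε) (hε5 : ε ≤ 1/5)
    (wB s1 s2 : Fin m → ℝ)
    (hwB : ∀ b, ε ≤ wB b ∧ wB b ≤ 1/2)
    (hsplit : ∀ b, wB b = s1 b + s2 b)
    (hs1 : ∀ b, ε ≤ s1 b ∧ s1 b ≤ 1/2 - ε)
    (hs2 : ∀ b, 0 ≤ s2 b) :
    ∃ (B : ℕ) (f : Fin m × Fin 2 → Fin B),
      (B : ℝ) ≤ 3 + 2 * (m : ℝ) / 3 ∧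
      ∀ t : Fin B,
        (∑ p ∈ Finset.univ.filter (fun p : Fin m × Fin 2 => f p = t),
          (if p.2 = 0 then s1 p.1 else s2 p.1)) ≤ 1 - ε := by
  classical
  set B := 2 * ((m + 2) / 3) with hBdef
  have hidx : ∀ p : Fin m × Fin 2,
      2 * (p.1.val / 3) +
        (if p.1.val % 3 = 0 then 0 else if p.1.val % 3 = 1 then p.2.val else 1) < B := by
    intro p
    have h1 := p.1.isLt
    have h2 := p.2.isLt
    have h3 : (if p.1.val % 3 = 0 then 0 else if p.1.val % 3 = 1 then p.2.val else 1) ≤ 1 := by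
      split_ifs <;> omega
    omega
  refine ⟨B, fun p => ⟨_, hidx p⟩, ?_, ?_⟩
  · have h3 : (m + 2) / 3 * 3 ≤ m + 2 := Nat.div_mul_le_self _ _
    have h4 : (B * 3 : ℕ) ≤ 2 * m + 4 := by omega
    have h5 : (B : ℝ) * 3 ≤ 2 * m + 4 := by exact_mod_cast h4
    linarith
  · intro t
    set g := t.val / 2 with hg
    set G : Fin m → ℝ := fun b =>
      if b.val / 3 = g then
        (if t.val % 2 = 0 then
          (if b.val % 3 = 0 then wB b else if b.val % 3 = 1 then s1 b else 0)
         else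
          (if b.val % 3 = 0 then 0 else if b.val % 3 = 1 then s2 b else wB b))
      else 0 with hGdef
    have hGnn : ∀ b, 0 ≤ G b := by
      intro b
      have h1 := (hwB b).1
      have h2 := (hs1 b).1
      have h3 := hs2 b
      simp only [hGdef]
      split_ifs <;> linarith
    have step2 : (∑ p ∈ Finset.univ.filter (fun p : Fin m × Fin 2 =>
          (⟨_, hidx p⟩ : Fin B) = t),
          (if p.2 = 0 then s1 p.1 else s2 p.1)) ≤ ∑ b : Fin m, G b := by
      rw [Finset.sum_filter, Fintype.sum_prod_type]
      apply Finset.sum_le_sum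
      intro b _
      rw [Fin.sum_univ_two]
      simp only [Fin.ext_iff]
      have hb3 : b.val % 3 = 0 ∨ b.val % 3 = 1 ∨ b.val % 3 = 2 := by omega
      have hw := hsplit b
      have h1 := (hwB b).1
      have h2 := (hs1 b).1
      have h3 := hs2 b
      simp only [hGdef]
      rcases hb3 with h | h | h <;>
        simp only [h, Fin.val_zero, Fin.val_one] <;> norm_num <;>
        split_ifs <;> (try linarith) <;> omega
    have step3 : ∑ b : Fin m, G b ≤ 1 - ε := by
      set F : ℕ → ℝ := fun n => if h : n < m then G ⟨n, h⟩ else 0 with hFdef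
      have hFG : ∀ b : Fin m, G b = F b.val := by
        intro b; simp [hFdef, b.isLt]
      have hFnn : ∀ n, 0 ≤ F n := by
        intro n; simp only [hFdef]; split_ifs with h
        · exact hGnn _
        · exact le_rfl
      calc ∑ b : Fin m, G b = ∑ n ∈ Finset.range m, F n := by
            rw [← Fin.sum_univ_eq_sum_range]
            exact Finset.sum_congr rfl fun b _ => hFG b
        _ = ∑ n ∈ (Finset.range m).filter (fun n => F n ≠ 0), F n := by
            rw [Finset.sum_filter_ne_zero]
        _ ≤ ∑ n ∈ ({3*g, 3*g+1, 3*g+2} : Finset ℕ), F n := by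
            apply Finset.sum_le_sum_of_subset_of_nonneg
            · intro n hn
              simp only [Finset.mem_filter, Finset.mem_range] at hn
              have hne : F n ≠ 0 := hn.2
              have hdiv : n / 3 = g := by
                by_contra hc
                apply hne
                simp only [hFdef, hn.1, dif_pos]
                simp only [hGdef, hc, if_false]
              simp only [Finset.mem_insert, Finset.mem_singleton]
              omega
            · intro n _ _; exact hFnn n
        _ = F (3*g) + F (3*g+1) + F (3*g+2) := by
            rw [Finset.sum_insert (by simp only [Finset.mem_insert, Finset.mem_singleton]; omega),
                Finset.sum_insert (by simp only [Finset.mem_singleton]; omega),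
                Finset.sum_singleton]
            ring
        _ ≤ 1 - ε := by
            have e0 : (3*g) / 3 = g := by omega
            have e0m : (3*g) % 3 = 0 := by omega
            have e1 : (3*g+1) / 3 = g := by omega
            have e1m : (3*g+1) % 3 = 1 := by omega
            have e2 : (3*g+2) / 3 = g := by omega
            have e2m : (3*g+2) % 3 = 2 := by omega
            have hB1 : F (3*g+1) ≤ 1/2 - ε := by
              simp only [hFdef]
              split_ifs with h
              · simp only [hGdef, e1, e1m, if_true]
                norm_num
                have h1 := (hwB (⟨3*g+1, h⟩ : Fin m)).2
                have h2 := (hs1 (⟨3*g+1, h⟩ : Fin m)).1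
                have h3 := (hs1 (⟨3*g+1, h⟩ : Fin m)).2
                have hw := hsplit (⟨3*g+1, h⟩ : Fin m)
                split_ifs <;> linarith
              · linarith
            have hA : F (3*g) + F (3*g+2) ≤ 1/2 := by
              by_cases hpar : t.val % 2 = 0
              · have h2z : F (3*g+2) = 0 := by
                  simp only [hFdef]
                  split_ifs with h
                  · simp only [hGdef, e2, e2m, hpar, if_true]; norm_num
                  · rfl
                have h0b : F (3*g) ≤ 1/2 := by
                  simp only [hFdef]
                  split_ifs with h
                  · simp only [hGdef, e0, e0m, hpar, if_true]
                    exact (hwB _).2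
                  · linarith
                linarith
              · have h0z : F (3*g) = 0 := by
                  simp only [hFdef]
                  split_ifs with h
                  · simp only [hGdef, e0, e0m, hpar, if_true, if_false]
                  · rfl
                have h2b : F (3*g+2) ≤ 1/2 := by
                  simp only [hFdef]
                  split_ifs with h
                  · simp only [hGdef, e2, e2m, hpar, if_true, if_false]
                    norm_num
                    exact (hwB _).2
                  · linarith
                linarith
            linarith
    exact le_trans step2 step3
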